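/- Let A and B be relational structures over disjoint signatures. If A has no algebraicity, then the wreath product A ≀ B has no algebraicity. That is, for every finite tuple t̄ of elements of A × B and every element (a', b') not among the entries of t̄, there exists an automorphism of A ≀ B fixing every entry of t̄ and moving (a', b'). -/
import Mathlib


/-- Arities of the wreath-product signature: the lifted `τ`-relations, the lifted
`σ`-relations, and the binary equivalence relation `E`. -/
@[reducible] def wAr {ιτ ισ : Type*} (arτ : ιτ → ℕ) (arσ : ισ → ℕ) : ιτ ⊕ (ισ ⊕ Unit) → ℕ
  | .inl i => arτ i
  | .inr (.inl i) => arσ i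
  | .inr (.inr _) => 2

/-- Relations of the wreath product `A ≀ B` on domain `A × B`. -/
def wRel {A B ιτ ισ : Type*} (arτ : ιτ → ℕ) (arσ : ισ → ℕ)
    (RA : ∀ i, (Fin (arτ i) → A) → Prop) (RB : ∀ i, (Fin (arσ i) → B) → Prop) :
    ∀ i : ιτ ⊕ (ισ ⊕ Unit), (Fin (wAr arτ arσ i) → A × B) → Prop
  | .inl i => fun t => (∀ j k, (t j).2 = (t k).2) ∧ RA i (fun j => (t j).1)
  | .inr (.inl i) => fun t => RB i (fun j => (t j).2)
  | .inr (.inr _) => fun t => (t 0).2 = (t 1).2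

/-- A bijection is an automorphism of a relational structure if it preserves all
relations in both directions. -/
def IsAut {X ι : Type*} (ar : ι → ℕ) (R : ∀ i, (Fin (ar i) → X) → Prop) (g : X ≃ X) : Prop :=
  ∀ (i : ι) (u : Fin (ar i) → X), R i (fun j => g (u j)) ↔ R i u

/-- If `A` has no algebraicity, then the wreath product `A ≀ B` has no
algebraicity: any element outside a finite tuple can be moved by an automorphism
fixing the tuple pointwise. -/
theorem stmt_7 {A B : Type*} {ιτ ισ : Type*} (arτ : ιτ → ℕ) (arσ : ισ → ℕ)
    (RA : ∀ i, (Fin (arτ i) → A) → Prop) (RB : ∀ i, (Fin (arσ i) → B) → Prop)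
    (hA : ∀ (k : ℕ) (t : Fin k → A) (a' : A), (∀ j, t j ≠ a') →
      ∃ g : A ≃ A, IsAut arτ RA g ∧ (∀ j, g (t j) = t j) ∧ g a' ≠ a') :
    ∀ (k : ℕ) (t : Fin k → A × B) (p : A × B), (∀ j, t j ≠ p) →
      ∃ w : A × B ≃ A × B, IsAut (wAr arτ arσ) (wRel arτ arσ RA RB) w ∧
        (∀ j, w (t j) = t j) ∧ w p ≠ p := by
  classical
  intro k t p hp
  obtain ⟨a', b'⟩ := p
  obtain ⟨g0, -, -, hg0⟩ := hA 0 Fin.elim0 a' (fun j => j.elim0)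
  set c := g0 a' with hc
  set s : Fin k → A := fun j => if (t j).2 = b' then (t j).1 else c with hs
  have hsne : ∀ j, s j ≠ a' := by
    intro j
    simp only [hs]
    split
    · intro h
      exact hp j (Prod.ext h (by assumption))
    · exact hg0
  obtain ⟨g, hgAut, hgfix, hgmove⟩ := hA k s a' hsne
  refine ⟨⟨fun x => if x.2 = b' then (g x.1, x.2) else x,
           fun x => if x.2 = b' then (g.symm x.1, x.2) else x, ?_, ?_⟩, ?_, ?_, ?_⟩
  · rintro ⟨a, b⟩
    by_cases h : b = b' <;> simp [h]
  · rintro ⟨a, b⟩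
    by_cases h : b = b' <;> simp [h]
  · intro i u
    have h2 : ∀ x : A × B,
        ((if x.2 = b' then (g x.1, x.2) else x) : A × B).2 = x.2 := by
      intro x; split <;> rfl
    cases i with
    | inl i =>
        simp only [wRel, Equiv.coe_fn_mk, h2]
        constructor
        · rintro ⟨hconst, hR⟩
          refine ⟨hconst, ?_⟩
          by_cases hall : ∀ j, (u j).2 = b'
          · have : (fun j => ((if (u j).2 = b' then (g (u j).1, (u j).2) else u j) : A × B).1)
                = fun j => g (u j).1 := by
              funext j; simp [hall j]
            rw [this] at hR
            exact (hgAut i _).mp hR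
          · push_neg at hall
            obtain ⟨j0, hj0⟩ := hall
            have hnone : ∀ j, (u j).2 ≠ b' := fun j => (hconst j j0) ▸ hj0
            have : (fun j => ((if (u j).2 = b' then (g (u j).1, (u j).2) else u j) : A × B).1)
                = fun j => (u j).1 := by
              funext j; simp [hnone j]
            rwa [this] at hR
        · rintro ⟨hconst, hR⟩
          refine ⟨hconst, ?_⟩
          by_cases hall : ∀ j, (u j).2 = b'
          · have : (fun j => ((if (u j).2 = b' then (g (u j).1, (u j).2) else u j) : A × B).1)
                = fun j => g (u j).1 := by
              funext j; simp [hall j]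
            rw [this]
            exact (hgAut i _).mpr hR
          · push_neg at hall
            obtain ⟨j0, hj0⟩ := hall
            have hnone : ∀ j, (u j).2 ≠ b' := fun j => (hconst j j0) ▸ hj0
            have : (fun j => ((if (u j).2 = b' then (g (u j).1, (u j).2) else u j) : A × B).1)
                = fun j => (u j).1 := by
              funext j; simp [hnone j]
            rwa [this]
    | inr i =>
        cases i with
        | inl i =>
            simp only [wRel, Equiv.coe_fn_mk, h2]
        | inr i =>
            simp only [wRel, Equiv.coe_fn_mk, h2]
  · intro j
    simp only [Equiv.coe_fn_mk]
    by_cases h : (t j).2 = b'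
    · have := hgfix j
      simp only [hs, h, if_pos] at this
      simp only [h, if_true, if_pos, this]
      exact Prod.ext rfl h.symm
    · simp [h]
  · simp only [Equiv.coe_fn_mk]
    rw [if_pos trivial]
    intro h
    exact hgmove (congrArg Prod.fst h)
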